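/- Let G be a finite simple graph and let C be a cycle of G, with a fixed cyclic orientation, such that there is no cycle C' of G with V(C) ⊊ V(C'). Let H be a connected component of G − V(C) and let T = {v ∈ V(C) : v has a neighbor in V(H)}. Then the set T⁺ = {v⁺ : v ∈ T} of successors of T on C is an independent set of G: no two distinct vertices of T⁺ are adjacent. -/

import Mathlib

open SimpleGraph Walk

private lemma closed_tail_ne_nil' {V : Type*} {G : SimpleGraph V} {v : V} {c : G.Walk v v}
    (hnn : ¬ c.Nil) : c.support.tail ≠ [] := by
  rw [Walk.not_nil_iff] at hnn
  obtain ⟨x, h, q, rfl⟩ := hnn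
  simp

private lemma closed_getLast_tail' {V : Type*} {G : SimpleGraph V} {v : V} {c : G.Walk v v}
    (hne : c.support.tail ≠ []) : c.support.tail.getLast hne = v := by
  have h2 : c.support.getLast? = some v := by
    rw [List.getLast?_eq_getLast (by simp), c.getLast_support]
  have h3 : c.support.tail.getLast? = some v := by
    rw [c.support_eq_cons] at h2
    cases h : c.support.tail with
    | nil => exact absurd h hne
    | cons x l => rw [h] at h2; simpa using h2
  have h4 := List.getLast?_eq_getLast (l := c.support.tail) hne
  rw [h3] at h4
  exact (Option.some.inj h4).symm

private lemma cycle_dropLast_nodup' {V : Type*} {G : SimpleGraph V} {v : V} {c : G.Walk v v}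
    (hc : c.IsCycle) : c.support.dropLast.Nodup := by
  have ht : c.support.tail.Nodup := hc.2
  have hne : c.support.tail ≠ [] := closed_tail_ne_nil' (by
    intro h; exact hc.ne_nil (Walk.nil_iff_eq_nil.mp h))
  have hsplit : c.support.tail = c.support.tail.dropLast ++ [v] := by
    conv_lhs => rw [← List.dropLast_concat_getLast hne]
    rw [closed_getLast_tail' hne]
  have hdl : c.support.dropLast = v :: c.support.tail.dropLast := by
    conv_lhs => rw [c.support_eq_cons]
    cases h : c.support.tail with
    | nil => exact absurd h hne
    | cons x l => simp
  rw [hdl, List.nodup_cons]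
  refine ⟨?_, ht.sublist (List.dropLast_sublist _)⟩
  intro hv
  have h3 := hsplit ▸ ht
  rw [List.nodup_append'] at h3
  exact h3.2.2 hv (List.mem_singleton_self v)

private lemma dart_eq_of_fst_eq' {V : Type*} {G : SimpleGraph V} {u w : V} {p : G.Walk u w}
    (h : p.support.dropLast.Nodup) {d d' : G.Dart}
    (hd : d ∈ p.darts) (hd' : d' ∈ p.darts) (hfst : d.fst = d'.fst) : d = d' :=
  List.inj_on_of_nodup_map (by rw [Walk.map_fst_darts]; exact h) hd hd' hfst

private lemma dart_eq_of_snd_eq' {V : Type*} {G : SimpleGraph V} {u w : V} {p : G.Walk u w}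
    (h : p.support.tail.Nodup) {d d' : G.Dart}
    (hd : d ∈ p.darts) (hd' : d' ∈ p.darts) (hsnd : d.snd = d'.snd) : d = d' :=
  List.inj_on_of_nodup_map (by rw [Walk.map_snd_darts]; exact h) hd hd' hsnd

private lemma mem_support_iff_mem_tail' {V : Type*} {G : SimpleGraph V} {v : V} {c : G.Walk v v}
    (hnn : ¬ c.Nil) (u : V) : u ∈ c.support ↔ u ∈ c.support.tail := by
  have hne := closed_tail_ne_nil' hnn
  constructor
  · intro h
    rcases (Walk.mem_support_iff c).mp h with rfl | h2
    · have := List.getLast_mem hne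
      rwa [closed_getLast_tail' hne] at this
    · exact h2
  · intro h; exact (Walk.mem_support_iff c).mpr (Or.inr h)

/-- Let `C` be a cycle of `G` (with the orientation given by traversal,
so that the darts of `C` record each vertex together with its successor) such that no cycle
`C'` of `G` satisfies `V(C) ⊊ V(C')`. Let `H` be (the vertex set of) a connected component of
`G - V(C)` and `T` the set of vertices of `C` with a neighbor in `H`. Then the set
`T⁺ = {d.snd : d a dart of C with d.fst ∈ T}` of successors of `T` on `C` is an independent
set of `G`. -/
theorem stmt13 {V : Type*} (G : SimpleGraph V)
    (v₀ : V) (c : G.Walk v₀ v₀) (hc : c.IsCycle)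
    (hmax : ∀ (w : V) (c' : G.Walk w w), c'.IsCycle →
      ¬ {u : V | u ∈ c.support} ⊂ {u : V | u ∈ c'.support})
    (H : Set V)
    (hHdisj : ∀ x ∈ H, x ∉ c.support)
    (hHconn : (G.induce H).Connected)
    (hHmax : ∀ x ∈ H, ∀ y, y ∉ H → y ∉ c.support → ¬ G.Adj x y)
    (T : Set V) (hT : T = {u : V | u ∈ c.support ∧ ∃ w ∈ H, G.Adj u w}) :
    ∀ d₁ ∈ c.darts, ∀ d₂ ∈ c.darts, d₁.fst ∈ T → d₂.fst ∈ T →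
      ¬ G.Adj d₁.snd d₂.snd := by
  classical
  subst hT
  rintro d₁ hd₁ d₂ hd₂ ⟨ha_sup, x, hxH, hax⟩ ⟨hb_sup, y, hyH, hby⟩ hadj
  by_cases hdd : d₁ = d₂
  · subst hdd; exact G.irrefl hadj
  have hab : d₁.fst ≠ d₂.fst := fun h =>
    hdd (dart_eq_of_fst_eq' (cycle_dropLast_nodup' hc) hd₁ hd₂ h)
  -- rotate the cycle to start at a := d₁.fst
  have hc₁ : (c.rotate _ ha_sup).IsCycle := hc.rotate ha_sup
  set c₁ := c.rotate _ ha_sup with hc₁def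
  have hnn₁ : ¬ c₁.Nil := fun h => hc₁.ne_nil (Walk.nil_iff_eq_nil.mp h)
  have hnnc : ¬ c.Nil := fun h => hc.ne_nil (Walk.nil_iff_eq_nil.mp h)
  have hmemc₁ : ∀ u, u ∈ c₁.support ↔ u ∈ c.support := by
    intro u
    rw [mem_support_iff_mem_tail' hnn₁, mem_support_iff_mem_tail' hnnc]
    exact (Walk.support_rotate c _ ha_sup).mem_iff
  have hd₁' : d₁ ∈ c₁.darts := (Walk.rotate_darts c _ ha_sup).mem_iff.mpr hd₁
  have hd₂' : d₂ ∈ c₁.darts := (Walk.rotate_darts c _ ha_sup).mem_iff.mpr hd₂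
  -- peel off the first dart of c₁
  obtain ⟨x₁, hax₁, q, hq⟩ := Walk.not_nil_iff.mp hnn₁
  have hfd : (⟨(d₁.fst, x₁), hax₁⟩ : G.Dart) ∈ c₁.darts := by
    rw [hq, Walk.darts_cons]; exact List.mem_cons_self
  have hx₁ : x₁ = d₁.snd := by
    have h := dart_eq_of_fst_eq' (cycle_dropLast_nodup' hc₁) hfd hd₁' rfl
    exact congrArg (·.snd) h
  subst hx₁
  have hqcyc := (Walk.cons_isCycle_iff q hax₁).mp (hq ▸ hc₁)
  have hqpath : q.IsPath := hqcyc.1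
  have hqnd : q.support.Nodup := hqpath.support_nodup
  -- locate b := d₂.fst in q
  have hbq : d₂.fst ∈ q.support := by
    have hb₁ : d₂.fst ∈ c₁.support := (hmemc₁ _).mpr hb_sup
    rw [hq, Walk.support_cons] at hb₁
    rcases List.mem_cons.mp hb₁ with h | h
    · exact absurd h.symm hab
    · exact h
  set q1 := q.takeUntil _ hbq with hq1def
  set q2 := q.dropUntil _ hbq with hq2def
  have hspec : q1.append q2 = q := q.take_spec hbq
  have hq1p : q1.IsPath := hqpath.takeUntil hbq
  have hq2p : q2.IsPath := hqpath.dropUntil hbq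
  have hq1nd : q1.support.Nodup := hq1p.support_nodup
  -- peel off the first dart of q2
  have hq2nn : ¬ q2.Nil := Walk.not_nil_of_ne (Ne.symm hab)
  obtain ⟨z, hbz, s, hs⟩ := Walk.not_nil_iff.mp hq2nn
  -- d₂ is a dart of q2
  have hd₂q : d₂ ∈ q.darts := by
    have h := hd₂'
    rw [hq, Walk.darts_cons] at h
    rcases List.mem_cons.mp h with h | h
    · exact absurd (congrArg (·.fst) h).symm hab
    · exact h
  have hbnotdrop : d₂.fst ∉ q1.support.dropLast := by
    have h5 : q1.support.dropLast ++ [d₂.fst] = q1.support := by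
      have h6 := List.dropLast_concat_getLast (l := q1.support) (by simp)
      rwa [q1.getLast_support] at h6
    have h7 := hq1nd
    rw [← h5, List.nodup_append'] at h7
    intro hmem
    exact h7.2.2 hmem (List.mem_singleton_self _)
  have hd₂q2 : d₂ ∈ q2.darts := by
    have hda : q.darts = q1.darts ++ q2.darts := by rw [← hspec, Walk.darts_append]
    rw [hda] at hd₂q
    rcases List.mem_append.mp hd₂q with h | h
    · exact absurd (by rw [← Walk.map_fst_darts]; exact List.mem_map_of_mem h) hbnotdrop
    · exact h
  have hz : z = d₂.snd := by
    have hfd2 : (⟨(d₂.fst, z), hbz⟩ : G.Dart) ∈ q2.darts := by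
      rw [hs, Walk.darts_cons]; exact List.mem_cons_self
    have hnd2 : q2.support.dropLast.Nodup :=
      hq2p.support_nodup.sublist (List.dropLast_sublist _)
    exact congrArg (·.snd) (dart_eq_of_fst_eq' hnd2 hfd2 hd₂q2 rfl)
  subst hz
  have hspath : s.IsPath := by
    have := hs ▸ hq2p
    exact ((Walk.cons_isPath_iff _ _).mp this).1
  -- the support of q splits as q1.support ++ s.support
  have hqsupp : q.support = q1.support ++ s.support := by
    rw [← hspec, Walk.support_append, hs, Walk.support_cons, List.tail_cons]
  have hq13 : (q1.support ++ s.support).Nodup := hqsupp ▸ hqnd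
  -- memberships in c.support
  have hq1C : ∀ u ∈ q1.support, u ∈ c.support := by
    intro u hu
    have h1 : u ∈ q.support := q.support_takeUntil_subset hbq hu
    have h2 : u ∈ c₁.support := by rw [hq, Walk.support_cons]; exact List.mem_cons_of_mem _ h1
    exact (hmemc₁ u).mp h2
  have hsC : ∀ u ∈ s.support, u ∈ c.support := by
    intro u hu
    have h1 : u ∈ q.support := by rw [hqsupp]; exact List.mem_append_right _ hu
    have h2 : u ∈ c₁.support := by rw [hq, Walk.support_cons]; exact List.mem_cons_of_mem _ h1
    exact (hmemc₁ u).mp h2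
  have haC : d₁.fst ∈ c.support := ha_sup
  have hasuccC : d₁.snd ∈ c.support := c.dart_snd_mem_support_of_mem_darts hd₁
  have hbsuccC : d₂.snd ∈ c.support := c.dart_snd_mem_support_of_mem_darts hd₂
  -- path through H
  obtain ⟨w0⟩ := hHconn.preconnected ⟨y, hyH⟩ ⟨x, hxH⟩
  set pH : G.Walk y x := Walk.map (SimpleGraph.Embedding.induce H).toHom w0.toPath.val
    with hpHdef
  have hpHp : pH.IsPath :=
    Walk.map_isPath_of_injective (Subtype.val_injective) w0.toPath.2
  have hpHH : ∀ u ∈ pH.support, u ∈ H := by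
    intro u hu
    change u ∈ (Walk.map (SimpleGraph.Embedding.induce H).toHom w0.toPath.val).support at hu
    rw [Walk.support_map] at hu
    obtain ⟨⟨u', hu'⟩, _, rfl⟩ := List.mem_map.mp hu
    exact hu'
  -- assemble the new walk
  set P : G.Walk d₁.snd d₂.snd :=
    q1.append ((Walk.cons hby (pH.append (Walk.cons hax.symm Walk.nil))).append s.reverse)
    with hPdef
  have hsP : P.support = q1.support ++ ((pH.support ++ [d₁.fst]) ++ s.reverse.support.tail) := by
    rw [hPdef, Walk.support_append, Walk.tail_support_append, Walk.support_cons, List.tail_cons,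
      Walk.support_append]
    congr 3
  have hanotrevtail : d₁.fst ∉ s.reverse.support.tail := by
    have h7 : s.reverse.support.Nodup := hspath.reverse.support_nodup
    rw [Walk.support_eq_cons] at h7
    exact (List.nodup_cons.mp h7).1
  have hrevsub : ∀ u ∈ s.reverse.support.tail, u ∈ s.support := by
    intro u hu
    have : u ∈ s.reverse.support := by
      rw [Walk.support_eq_cons]; exact List.mem_cons_of_mem _ hu
    rwa [Walk.support_reverse, List.mem_reverse] at this
  have hanotq1 : d₁.fst ∉ q1.support := by
    have hasup : d₁.fst ∈ s.support := by
      have := s.end_mem_support; exact this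
    intro hmem
    exact ((List.nodup_append'.mp hq13).2.2 hmem) hasup
  have hdisj13 : List.Disjoint q1.support s.support := (List.nodup_append'.mp hq13).2.2
  have hPp : P.IsPath := by
    rw [Walk.isPath_def, hsP]
    have N2 : pH.support.Nodup := hpHp.support_nodup
    have N3 : s.reverse.support.tail.Nodup :=
      hspath.reverse.support_nodup.sublist (List.tail_sublist _)
    refine List.Nodup.append hq1nd
      (List.Nodup.append (List.Nodup.append N2 (List.nodup_singleton _) ?_) N3 ?_) ?_
    · intro u hu hv
      rw [List.mem_singleton] at hv
      subst hv
      exact hHdisj _ (hpHH _ hu) haC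
    · intro u hu hv
      rcases List.mem_append.mp hu with h | h
      · exact hHdisj u (hpHH u h) (hsC u (hrevsub u hv))
      · rw [List.mem_singleton] at h
        subst h
        exact hanotrevtail hv
    · intro u hu hv
      rcases List.mem_append.mp hv with h | h
      · rcases List.mem_append.mp h with h' | h'
        · exact hHdisj u (hpHH u h') (hq1C u hu)
        · rw [List.mem_singleton] at h'
          subst h'
          exact hanotq1 hu
      · exact hdisj13 hu (hrevsub u h)
  have hPe : ¬ s(d₂.snd, d₁.snd) ∈ P.edges := by
    intro he
    have hPedges : P.edges =
        q1.edges ++ ((s(d₂.fst, y) :: (pH.edges ++ [s(x, d₁.fst)])) ++ s.reverse.edges) := by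
      rw [hPdef, Walk.edges_append, Walk.edges_append, Walk.edges_cons, Walk.edges_append,
        Walk.edges_cons, Walk.edges_nil]
    rw [hPedges] at he
    rcases List.mem_append.mp he with h | h
    · have h1 : d₂.snd ∈ q1.support := q1.fst_mem_support_of_mem_edges h
      exact hdisj13 h1 s.start_mem_support
    rcases List.mem_append.mp h with h | h
    · rcases List.mem_cons.mp h with h | h
      · rcases Sym2.eq_iff.mp h with ⟨h1, h2⟩ | ⟨h1, h2⟩
        · exact hHdisj y hyH (h2 ▸ hasuccC)
        · exact hHdisj y hyH (h1 ▸ hbsuccC)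
      rcases List.mem_append.mp h with h | h
      · have h1 : d₂.snd ∈ pH.support := pH.fst_mem_support_of_mem_edges h
        exact hHdisj _ (hpHH _ h1) hbsuccC
      · rw [List.mem_singleton] at h
        rcases Sym2.eq_iff.mp h with ⟨h1, h2⟩ | ⟨h1, h2⟩
        · exact hHdisj x hxH (h1 ▸ hbsuccC)
        · exact hHdisj x hxH (h2 ▸ hasuccC)
    · rw [Walk.edges_reverse, List.mem_reverse] at h
      have h1 : d₁.snd ∈ s.support := s.snd_mem_support_of_mem_edges h
      exact hdisj13 q1.start_mem_support h1
  have hC' : (Walk.cons hadj.symm P).IsCycle :=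
    (Walk.cons_isCycle_iff P hadj.symm).mpr ⟨hPp, hPe⟩
  refine hmax d₂.snd (Walk.cons hadj.symm P) hC' ?_
  rw [Set.ssubset_def]
  constructor
  · intro u hu
    simp only [Set.mem_setOf_eq] at hu ⊢
    rw [Walk.support_cons]
    refine List.mem_cons_of_mem _ ?_
    rw [hsP]
    have hu₁ : u ∈ c₁.support := (hmemc₁ u).mpr hu
    rw [hq, Walk.support_cons] at hu₁
    rcases List.mem_cons.mp hu₁ with rfl | hu₂
    · exact List.mem_append_right _ (List.mem_append_left _ (List.mem_append_right _
        (List.mem_singleton_self _)))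
    · rw [hqsupp] at hu₂
      rcases List.mem_append.mp hu₂ with h | h
      · exact List.mem_append_left _ h
      · by_cases hua : u = d₁.fst
        · subst hua
          exact List.mem_append_right _ (List.mem_append_left _ (List.mem_append_right _
            (List.mem_singleton_self _)))
        · refine List.mem_append_right _ (List.mem_append_right _ ?_)
          have h8 : u ∈ s.reverse.support := by
            rw [Walk.support_reverse, List.mem_reverse]; exact h
          rw [Walk.support_eq_cons] at h8
          rcases List.mem_cons.mp h8 with h9 | h9
          · exact absurd h9 hua
          · exact h9
  · intro hcon
    have hyC' : y ∈ {u : V | u ∈ (Walk.cons hadj.symm P).support} := by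
      simp only [Set.mem_setOf_eq, Walk.support_cons]
      refine List.mem_cons_of_mem _ ?_
      rw [hsP]
      exact List.mem_append_right _ (List.mem_append_left _ (List.mem_append_left _
        pH.start_mem_support))
    exact hHdisj y hyH (hcon hyC')
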